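/- Let X be a Stone space and 𝓕 a sheaf of ℚ-vector spaces on X. Then 𝓕 is soft: for every closed subset K ⊆ X, the restriction map 𝓕(X) → 𝓕(K) := colim_{U ⊇ K open} 𝓕(U) is surjective. -/

import Mathlib

open CategoryTheory TopologicalSpace Opposite

/-- A compact set inside an open set of a compact Hausdorff totally disconnected
space is contained in a clopen set inside the open set. -/
lemma exists_isClopen_between {X : Type*} [TopologicalSpace X] [CompactSpace X]
    [T2Space X] [TotallyDisconnectedSpace X] {K U : Set X} (hK : IsCompact K)
    (hU : IsOpen U) (hKU : K ⊆ U) :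
    ∃ V : Set X, IsClopen V ∧ K ⊆ V ∧ V ⊆ U := by
  have h : ∀ x ∈ K, ∃ V : Set X, IsClopen V ∧ x ∈ V ∧ V ⊆ U := fun x hx =>
    compact_exists_isClopen_in_isOpen hU (hKU hx)
  choose! V hVclopen hxV hVU using h
  obtain ⟨s, hsK, hfin, hcover⟩ := hK.elim_finite_subcover_image
    (fun x hx => (hVclopen x hx).2) (fun x hx => Set.subset_biUnion_of_mem (u := V) hx (hxV x hx))
  refine ⟨⋃ x ∈ s, V x, ?_, hcover, Set.iUnion₂_subset fun x hx => hVU x (hsK hx)⟩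
  exact Set.Finite.isClopen_biUnion hfin fun x hx => hVclopen x (hsK hx)

/-- Every sheaf of `ℚ`-vector spaces on a Stone space `X` is soft: for every
closed `K ⊆ X`, the map `𝓕(X) → 𝓕(K) = colim_{U ⊇ K open} 𝓕(U)` is surjective.
Elementwise: any section over an open `U ⊇ K` agrees, on some smaller open
`V` with `K ⊆ V ⊆ U`, with the restriction of a global section. -/
theorem stmt5 (X : TopCat) [CompactSpace X] [T2Space X]
    [TotallyDisconnectedSpace X]
    (F : TopCat.Sheaf (ModuleCat ℚ) X) (K : Set X) (hK : IsClosed K) :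
    ∀ (U : Opens X), K ⊆ (U : Set X) → ∀ s : F.val.obj (op U),
      ∃ (V : Opens X) (hVU : V ≤ U), K ⊆ (V : Set X) ∧
        ∃ t : F.val.obj (op ⊤),
          F.val.map (homOfLE (le_top : V ≤ ⊤)).op t =
            F.val.map (homOfLE hVU).op s := by
  intro U hKU s
  obtain ⟨Vs, hVclopen, hKV, hVU⟩ :=
    exists_isClopen_between hK.isCompact U.isOpen hKU
  set V : Opens X := ⟨Vs, hVclopen.2⟩ with hV
  set W : Opens X := ⟨Vsᶜ, hVclopen.1.isOpen_compl⟩ with hW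
  have hsup : V ⊔ W = ⊤ := by
    apply SetLike.ext'
    simp [V, W, Opens.coe_sup]
  have hinf : V ⊓ W = ⊥ := by
    apply SetLike.ext'
    simp [V, W]
  -- the section we want to extend, restricted to V
  set x : F.val.obj (op V) := F.val.map (homOfLE (show V ≤ U from hVU)).op s with hx
  -- F(V ⊔ W) is the product F(V) × F(W)
  have P := F.isProductOfDisjoint V W hinf
  -- the morphism ℚ ⟶ F(V) sending 1 to x, paired with 0 into F(W)
  let a : ModuleCat.of ℚ (ULift.{u_2} ℚ) ⟶ F.val.obj (op V) :=
    ModuleCat.ofHom ((LinearMap.toSpanSingleton ℚ _ x).comp ULift.moduleEquiv.toLinearMap)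
  let fan : Limits.BinaryFan (F.val.obj (op V)) (F.val.obj (op W)) :=
    Limits.BinaryFan.mk a (0 : ModuleCat.of ℚ (ULift.{u_2} ℚ) ⟶ F.val.obj (op W))
  let l := P.lift fan
  have hl : l ≫ F.val.map (homOfLE (le_sup_left : V ≤ V ⊔ W)).op = a :=
    P.fac fan ⟨Limits.WalkingPair.left⟩
  set t' : F.val.obj (op (V ⊔ W)) := l (ULift.up (1 : ℚ)) with ht'
  refine ⟨V, hVU, hKV, F.val.map (eqToHom hsup.symm).op t', ?_⟩
  have hcomp : (eqToHom hsup.symm).op ≫ (homOfLE (le_top : V ≤ ⊤)).op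
      = (homOfLE (le_sup_left : V ≤ V ⊔ W)).op := by
    apply Quiver.Hom.unop_inj
    apply Subsingleton.elim
  calc F.val.map (homOfLE (le_top : V ≤ ⊤)).op
          (F.val.map (eqToHom hsup.symm).op t')
      = (F.val.map (eqToHom hsup.symm).op ≫
          F.val.map (homOfLE (le_top : V ≤ ⊤)).op) t' := rfl
    _ = F.val.map (homOfLE (le_sup_left : V ≤ V ⊔ W)).op t' := by
        rw [← F.val.map_comp, hcomp]
    _ = (l ≫ F.val.map (homOfLE (le_sup_left : V ≤ V ⊔ W)).op) (ULift.up (1 : ℚ)) := rfl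
    _ = a (ULift.up (1 : ℚ)) := by rw [hl]
    _ = (1 : ℚ) • x := rfl
    _ = x := one_smul ℚ x
    _ = F.val.map (homOfLE hVU).op s := rfl
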